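/- Let R be a left-symmetric conformal algebra, Q a ℂ[∂]-module, and Ω(R,Q) = (φ, ψ, l, r, g_λ(·,·), ∘_λ) an extending datum of R by Q. Then R♮Q with the λ-product (a+x)_λ(b+y) = (a_λ b + φ(x)_λ b + ψ(y)_{−λ−∂}a + g_λ(x,y)) + (x∘_λ y + l(a)_λ y + r(b)_{−λ−∂}x) is a left-symmetric conformal algebra if and only if the following ten compatibility conditions hold for all a, b ∈ R and x, y, z ∈ Q: (LC1) (φ(x)_λ a − ψ(x)_λ a)_{λ+μ} b + φ(r(a)_μ x − l(a)_μ x)_{λ+μ} b = φ(x)_λ(a_μ b) − a_μ(φ(x)_λ b) − ψ(r(b)_{−λ−∂}x)_{−μ−∂} a; (LC2) r(b)_{−λ−μ−∂}(r(a)_μ x − l(a)_μ x) = r(a_μ b)_{−λ−∂} x − l(a)_μ(r(b)_{−λ−∂} x); (LC3) ψ(x)_{−λ−μ−∂}(a_λ b − b_μ a) = a_λ(ψ(x)_{−μ−∂} b) − b_μ(ψ(x)_{−λ−∂} a) + ψ(l(b)_μ x)_{−λ−∂} a − ψ(l(a)_λ x)_{−μ−∂} b; (LC4) l(a_λ b)_{λ+μ}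 x − l(b_μ a)_{λ+μ} x = l(a)_λ(l(b)_μ x) − l(b)_μ(l(a)_λ x); (LC5) ψ(y)_{−λ−μ−∂}(ψ(x)_μ a − φ(x)_μ a) + g_{λ+μ}(l(a)_λ x, y) − a_λ(g_μ(x,y)) − ψ(x∘_μ y)_{−λ−∂} a = g_{λ+μ}(r(a)_{−μ−∂} x, y) − φ(x)_μ(ψ(y)_{−λ−∂} a) − g_μ(x, l(a)_λ y); (LC6) (l(a)_λ x)∘_{λ+μ} y + l(ψ(x)_{−λ−∂} a)_{λ+μ} y − l(a)_λ(x∘_μ y) = l(φ(x)_μ a)_{λ+μ} y + (r(a)_{−μ−∂} x)∘_{λ+μ} y − r(ψ(y)_{−λ−∂} a)_{−μ−∂} x − x∘_μ(l(a)_λ y); (LC7) (g_λ(x,y) − g_μ(y,x))_{λ+μ} a + φ(x∘_λ y − y∘_μ x)_{λ+μ} a = φ(x)_λ(φ(y)_μ a) − φ(y)_μ(φ(x)_λ a) + g_λ(x, r(a)_{−μ−∂} y) − g_μ(y, r(a)_{−λ−∂} x); (LC8) r(a)_{−λ−μ−∂}(x∘_λ y − y∘_μ x) = r(φ(y)_μ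 a)_{−λ−∂} x − r(φ(x)_λ a)_{−μ−∂} y + x∘_λ(r(a)_{−μ−∂} y) − y∘_μ(r(a)_{−λ−∂} x); (LC9) ψ(z)_{−λ−μ−∂} g_λ(x,y) + g_{λ+μ}(x∘_λ y, z) − φ(x)_λ g_μ(y,z) − g_λ(x, y∘_μ z) = ψ(z)_{−λ−μ−∂} g_μ(y,x) + g_{λ+μ}(y∘_μ x, z) − φ(y)_μ g_λ(x,z) − g_μ(y, x∘_λ z); (LC10) l(g_λ(x,y))_{λ+μ} z + (x∘_λ y)∘_{λ+μ} z − r(g_μ(y,z))_{−λ−∂} x − x∘_λ(y∘_μ z) = l(g_μ(y,x))_{λ+μ} z + (y∘_μ x)∘_{λ+μ} z − r(g_λ(x,z))_{−μ−∂} y − y∘_μ(x∘_λ z). -/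

import Mathlib

open Finsupp Polynomial

noncomputable section

/-- One-variable conformal polynomials in λ with coefficients in `W`:
the coefficient of `λ^n` sits at index `n`. -/
abbrev OP (W : Type*) [Zero W] := ℕ →₀ W

/-- Two-variable conformal polynomials in λ, μ with coefficients in `W`. -/
abbrev TP (W : Type*) [Zero W] := (ℕ × ℕ) →₀ W

section Defs

variable {U V W L : Type*}
variable [AddCommGroup U] [Module ℂ U] [AddCommGroup V] [Module ℂ V]
variable [AddCommGroup W] [Module ℂ W] [AddCommGroup L] [Module ℂ L]

/-- Multiplication by the variable λ on one-variable polynomials. -/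
def lsh : OP W →ₗ[ℂ] OP W := Finsupp.lmapDomain W ℂ (· + 1)

/-- Multiplication by λ on two-variable polynomials. -/
def LX : TP W →ₗ[ℂ] TP W := Finsupp.lmapDomain W ℂ (fun p => (p.1 + 1, p.2))

/-- Multiplication by μ on two-variable polynomials. -/
def LY : TP W →ₗ[ℂ] TP W := Finsupp.lmapDomain W ℂ (fun p => (p.1, p.2 + 1))

/-- Coefficientwise action of ∂ on one-variable polynomials. -/
def pD (dW : W →ₗ[ℂ] W) : OP W →ₗ[ℂ] OP W := Finsupp.mapRange.linearMap dW

/-- Coefficientwise action of ∂ on two-variable polynomials. -/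
def PD (dW : W →ₗ[ℂ] W) : TP W →ₗ[ℂ] TP W := Finsupp.mapRange.linearMap dW

/-- The operator −λ−∂ on one-variable polynomials. -/
def nD (dW : W →ₗ[ℂ] W) : OP W →ₗ[ℂ] OP W := -lsh - pD dW

/-- The operator −λ−∂ on two-variable polynomials. -/
def nX (dW : W →ₗ[ℂ] W) : TP W →ₗ[ℂ] TP W := -LX - PD dW

/-- The operator −μ−∂ on two-variable polynomials. -/
def nY (dW : W →ₗ[ℂ] W) : TP W →ₗ[ℂ] TP W := -LY - PD dW

/-- The operator −λ−μ−∂ on two-variable polynomials. -/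
def nXY (dW : W →ₗ[ℂ] W) : TP W →ₗ[ℂ] TP W := -LX - LY - PD dW

/-- Substitution of a (commuting) operator `A` for the variable of a one-variable
polynomial, with values in two-variable polynomials. -/
def evA (A : TP W →ₗ[ℂ] TP W) : OP W →ₗ[ℂ] TP W :=
  Finsupp.lsum ℂ (fun k => (A ^ k) ∘ₗ Finsupp.lsingle ((0, 0) : ℕ × ℕ))

/-- Substitution of an operator `A` for the variable of a one-variable polynomial. -/
def evA1 (A : OP W →ₗ[ℂ] OP W) : OP W →ₗ[ℂ] OP W :=
  Finsupp.lsum ℂ (fun k => (A ^ k) ∘ₗ Finsupp.lsingle (0 : ℕ))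

/-- `u_A v`: the pairing `m` evaluated with the variable replaced by the operator `A`. -/
def ev2 (m : U →ₗ[ℂ] V →ₗ[ℂ] OP W) (A : TP W →ₗ[ℂ] TP W) (u : U) (v : V) : TP W :=
  evA A (m u v)

/-- Extension of the pairing `m`, in its first argument, to two-variable polynomials. -/
def exL (m : U →ₗ[ℂ] V →ₗ[ℂ] OP W) (A : TP W →ₗ[ℂ] TP W) (p : TP U) (v : V) : TP W :=
  Finsupp.sum p fun ij u => (LX ^ ij.1) ((LY ^ ij.2) (evA A (m u v)))

/-- Extension of the pairing `m`, in its second argument, to two-variable polynomials. -/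
def exR (m : U →ₗ[ℂ] V →ₗ[ℂ] OP W) (A : TP W →ₗ[ℂ] TP W) (u : U) (p : TP V) : TP W :=
  Finsupp.sum p fun ij v => (LX ^ ij.1) ((LY ^ ij.2) (evA A (m u v)))

/-- Extension of a unary conformal-linear map to two-variable polynomials. -/
def exU (D : U →ₗ[ℂ] OP W) (A : TP W →ₗ[ℂ] TP W) (p : TP U) : TP W :=
  Finsupp.sum p fun ij u => (LX ^ ij.1) ((LY ^ ij.2) (evA A (D u)))

/-- Coefficientwise application of a linear map to a one-variable polynomial. -/
def pMap (f : U →ₗ[ℂ] W) : OP U →ₗ[ℂ] OP W := Finsupp.mapRange.linearMap f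

/-- A conformal bilinear map: `f(∂u, v) = −λ f(u,v)` and `f(u, ∂v) = (λ+∂) f(u,v)`. -/
structure ConfBilin (dU : U →ₗ[ℂ] U) (dV : V →ₗ[ℂ] V) (dW : W →ₗ[ℂ] W)
    (m : U →ₗ[ℂ] V →ₗ[ℂ] OP W) : Prop where
  dleft : ∀ u v, m (dU u) v = -lsh (m u v)
  dright : ∀ u v, m u (dV v) = lsh (m u v) + pD dW (m u v)

/-- A left-symmetric conformal algebra structure on the ℂ[∂]-module `(L, dL)`. -/
structure IsLSCA (dL : L →ₗ[ℂ] L) (m : L →ₗ[ℂ] L →ₗ[ℂ] OP L) : Prop where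
  conf : ConfBilin dL dL dL m
  lsym : ∀ a b c : L,
    exL m (LX + LY) (ev2 m LX a b) c - exR m LX a (ev2 m LY b c)
      = exL m (LX + LY) (ev2 m LY b a) c - exR m LY b (ev2 m LX a c)

/-- The commutator λ-bracket `[u_λ v] = u_λ v − v_{−λ−∂} u`. -/
def commut (dL : L →ₗ[ℂ] L) (m : L →ₗ[ℂ] L →ₗ[ℂ] OP L) : L →ₗ[ℂ] L →ₗ[ℂ] OP L :=
  m - (m.compr₂ (evA1 (nD dL))).flip

/-- A Lie conformal algebra structure on the ℂ[∂]-module `(L, dL)`. -/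
structure IsLieCA (dL : L →ₗ[ℂ] L) (br : L →ₗ[ℂ] L →ₗ[ℂ] OP L) : Prop where
  dleft : ∀ u v, br (dL u) v = -lsh (br u v)
  dright : ∀ u v, br u (dL v) = lsh (br u v) + pD dL (br u v)
  skew : ∀ u v, br u v = -evA1 (nD dL) (br v u)
  jacobi : ∀ a b c : L,
    exR br LX a (ev2 br LY b c)
      = exL br (LX + LY) (ev2 br LX a b) c + exR br LY b (ev2 br LX a c)

end Defs

section Ext

variable {R Q : Type*} [AddCommGroup R] [Module ℂ R] [AddCommGroup Q] [Module ℂ Q]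

/-- An extending datum of a left-symmetric conformal algebra `R` by a ℂ[∂]-module `Q`. -/
structure ExtDatum (dR : R →ₗ[ℂ] R) (dQ : Q →ₗ[ℂ] Q) where
  phi : Q →ₗ[ℂ] R →ₗ[ℂ] OP R
  psi : Q →ₗ[ℂ] R →ₗ[ℂ] OP R
  l : R →ₗ[ℂ] Q →ₗ[ℂ] OP Q
  r : R →ₗ[ℂ] Q →ₗ[ℂ] OP Q
  g : Q →ₗ[ℂ] Q →ₗ[ℂ] OP R
  o : Q →ₗ[ℂ] Q →ₗ[ℂ] OP Q
  hphi : ConfBilin dQ dR dR phi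
  hpsi : ConfBilin dQ dR dR psi
  hl : ConfBilin dR dQ dQ l
  hr : ConfBilin dR dQ dQ r
  hg : ConfBilin dQ dQ dR g
  ho : ConfBilin dQ dQ dQ o

/-- Embedding of `R`-valued polynomials into `(R ⊕ Q)`-valued polynomials. -/
def inlP (R Q : Type*) [AddCommGroup R] [Module ℂ R] [AddCommGroup Q] [Module ℂ Q] :
    OP R →ₗ[ℂ] OP (R × Q) := Finsupp.mapRange.linearMap (LinearMap.inl ℂ R Q)

/-- Embedding of `Q`-valued polynomials into `(R ⊕ Q)`-valued polynomials. -/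
def inrP (R Q : Type*) [AddCommGroup R] [Module ℂ R] [AddCommGroup Q] [Module ℂ Q] :
    OP Q →ₗ[ℂ] OP (R × Q) := Finsupp.mapRange.linearMap (LinearMap.inr ℂ R Q)

/-- The λ-product of the unified product `R ♮ Q`:
`(a+x) _λ (b+y) = (a_λ b + φ(x)_λ b + ψ(y)_{−λ−∂} a + g_λ(x,y)) + (x∘_λ y + l(a)_λ y + r(b)_{−λ−∂} x)`. -/
def uprod (dR : R →ₗ[ℂ] R) (dQ : Q →ₗ[ℂ] Q) (Ω : ExtDatum dR dQ)
    (m : R →ₗ[ℂ] R →ₗ[ℂ] OP R) :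
    (R × Q) →ₗ[ℂ] (R × Q) →ₗ[ℂ] OP (R × Q) :=
  ((m.compl₁₂ (LinearMap.fst ℂ R Q) (LinearMap.fst ℂ R Q)).compr₂ (inlP R Q))
    + ((Ω.phi.compl₁₂ (LinearMap.snd ℂ R Q) (LinearMap.fst ℂ R Q)).compr₂ (inlP R Q))
    + (((Ω.psi.compl₁₂ (LinearMap.snd ℂ R Q) (LinearMap.fst ℂ R Q)).compr₂
        (inlP R Q ∘ₗ evA1 (nD dR))).flip)
    + ((Ω.g.compl₁₂ (LinearMap.snd ℂ R Q) (LinearMap.snd ℂ R Q)).compr₂ (inlP R Q))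
    + ((Ω.o.compl₁₂ (LinearMap.snd ℂ R Q) (LinearMap.snd ℂ R Q)).compr₂ (inrP R Q))
    + ((Ω.l.compl₁₂ (LinearMap.fst ℂ R Q) (LinearMap.snd ℂ R Q)).compr₂ (inrP R Q))
    + (((Ω.r.compl₁₂ (LinearMap.fst ℂ R Q) (LinearMap.snd ℂ R Q)).compr₂
        (inrP R Q ∘ₗ evA1 (nD dQ))).flip)

lemma uprod_apply (dR : R →ₗ[ℂ] R) (dQ : Q →ₗ[ℂ] Q) (Ω : ExtDatum dR dQ)
    (m : R →ₗ[ℂ] R →ₗ[ℂ] OP R) (e₁ e₂ : R × Q) :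
    uprod dR dQ Ω m e₁ e₂ =
      inlP R Q (m e₁.1 e₂.1 + Ω.phi e₁.2 e₂.1 + evA1 (nD dR) (Ω.psi e₂.2 e₁.1) + Ω.g e₁.2 e₂.2)
      + inrP R Q (Ω.o e₁.2 e₂.2 + Ω.l e₁.1 e₂.2 + evA1 (nD dQ) (Ω.r e₂.1 e₁.2)) := by
  simp [uprod, LinearMap.add_apply, LinearMap.compr₂_apply, LinearMap.compl₁₂_apply,
    LinearMap.flip_apply, map_add, LinearMap.comp_apply]
  abel

lemma uprod_res (dR : R →ₗ[ℂ] R) (dQ : Q →ₗ[ℂ] Q) (Ω : ExtDatum dR dQ)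
    (m : R →ₗ[ℂ] R →ₗ[ℂ] OP R) (a b : R) :
    uprod dR dQ Ω m (a, (0 : Q)) (b, 0) = inlP R Q (m a b) := by
  rw [uprod_apply]
  simp

/-- Isomorphism property of left-symmetric conformal algebra structures, via
a ℂ[∂]-module automorphism `T` of the underlying module `E`. -/
structure IsIsoLSCA {E : Type*} [AddCommGroup E] [Module ℂ E] (dE : E →ₗ[ℂ] E)
    (m₁ m₂ : E →ₗ[ℂ] E →ₗ[ℂ] OP E) (T : E ≃ₗ[ℂ] E) : Prop where
  dcomm : ∀ e, T (dE e) = dE (T e)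
  mult : ∀ u v, m₂ (T u) (T v) = pMap (T : E →ₗ[ℂ] E) (m₁ u v)

/-- `T` stabilizes `R`, i.e. `T ∘ i = i` for the inclusion `i : R → R ⊕ Q`. -/
def Stab (T : (R × Q) ≃ₗ[ℂ] (R × Q)) : Prop := ∀ a : R, T (a, 0) = (a, 0)

/-- `T` co-stabilizes `Q`, i.e. `π ∘ T = π` for the projection `π : R ⊕ Q → Q`. -/
def Costab (T : (R × Q) ≃ₗ[ℂ] (R × Q)) : Prop := ∀ e, (T e).2 = e.2

end Ext
section GenHelpers

variable {U V W W' W'' L : Type*}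
variable [AddCommGroup U] [Module ℂ U] [AddCommGroup V] [Module ℂ V]
variable [AddCommGroup W] [Module ℂ W] [AddCommGroup W'] [Module ℂ W']
variable [AddCommGroup W''] [Module ℂ W''] [AddCommGroup L] [Module ℂ L]

lemma pow_comm_apply {M N : Type*} [AddCommGroup M] [Module ℂ M] [AddCommGroup N] [Module ℂ N]
    (F : M →ₗ[ℂ] N) (B : M →ₗ[ℂ] M) (C : N →ₗ[ℂ] N)
    (h : ∀ q, F (B q) = C (F q)) : ∀ (n : ℕ) (q), F ((B ^ n) q) = (C ^ n) (F q) := by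
  intro n
  induction n with
  | zero => intro q; simp
  | succ k ih =>
    intro q
    rw [pow_succ, pow_succ, Module.End.mul_apply, Module.End.mul_apply, ih, h]

/-- mapRange commutes with lmapDomain. -/
lemma mapRange_lmapDomain {α β : Type*} (f : W →ₗ[ℂ] W') (σ : α → β) (p : α →₀ W) :
    Finsupp.mapRange.linearMap f (Finsupp.lmapDomain W ℂ σ p)
      = Finsupp.lmapDomain W' ℂ σ (Finsupp.mapRange.linearMap f p) := by
  induction p using Finsupp.induction_linear with
  | zero => simp
  | add a b ha hb => simp only [map_add, ha, hb]
  | single a b => simp [Finsupp.mapDomain_single]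

lemma mapRange_mapRange {α : Type*} (f : W' →ₗ[ℂ] W'') (g : W →ₗ[ℂ] W') (p : α →₀ W) :
    Finsupp.mapRange.linearMap f (Finsupp.mapRange.linearMap g p)
      = Finsupp.mapRange.linearMap (f ∘ₗ g) p := by
  ext a; simp

-- basic commutations
lemma LX_PD (d : W →ₗ[ℂ] W) (q : TP W) : LX (PD d q) = PD d (LX q) :=
  (mapRange_lmapDomain d _ q).symm

lemma LY_PD (d : W →ₗ[ℂ] W) (q : TP W) : LY (PD d q) = PD d (LY q) :=
  (mapRange_lmapDomain d _ q).symm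

lemma lsh_pD (d : W →ₗ[ℂ] W) (q : OP W) : lsh (pD d q) = pD d (lsh q) :=
  (mapRange_lmapDomain d _ q).symm

lemma LX_LY (q : TP W) : LX (LY q) = LY (LX q) := by
  induction q using Finsupp.induction_linear with
  | zero => simp
  | add a b ha hb => simp [map_add, ha, hb]
  | single a b => simp [LX, LY, Finsupp.mapDomain_single]

lemma LX_single (p : ℕ × ℕ) (w : W) :
    LX (Finsupp.single p w) = Finsupp.single (p.1 + 1, p.2) w := by
  simp [LX, Finsupp.mapDomain_single]

lemma LY_single (p : ℕ × ℕ) (w : W) :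
    LY (Finsupp.single p w) = Finsupp.single (p.1, p.2 + 1) w := by
  simp [LY, Finsupp.mapDomain_single]

lemma PD_single (d : W →ₗ[ℂ] W) (p : ℕ × ℕ) (w : W) :
    PD d (Finsupp.single p w) = Finsupp.single p (d w) := by
  simp [PD]

lemma pD_single (d : W →ₗ[ℂ] W) (k : ℕ) (w : W) :
    pD d (Finsupp.single k w) = Finsupp.single k (d w) := by
  simp [pD]

-- evA basics
lemma evA_apply (A : TP W →ₗ[ℂ] TP W) (p : OP W) :
    evA A p = p.sum fun k w => (A ^ k) (Finsupp.single ((0, 0) : ℕ × ℕ) w) := by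
  rw [evA, Finsupp.lsum_apply]
  rfl

lemma evA1_apply (A : OP W →ₗ[ℂ] OP W) (p : OP W) :
    evA1 A p = p.sum fun k w => (A ^ k) (Finsupp.single (0 : ℕ) w) := by
  rw [evA1, Finsupp.lsum_apply]
  rfl

lemma evA_single (A : TP W →ₗ[ℂ] TP W) (k : ℕ) (w : W) :
    evA A (Finsupp.single k w) = (A ^ k) (Finsupp.single ((0, 0) : ℕ × ℕ) w) := by
  rw [evA_apply, Finsupp.sum_single_index]; simp

lemma evA1_single (A : OP W →ₗ[ℂ] OP W) (k : ℕ) (w : W) :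
    evA1 A (Finsupp.single k w) = (A ^ k) (Finsupp.single (0 : ℕ) w) := by
  rw [evA1_apply, Finsupp.sum_single_index]; simp

lemma evA_lsh (A : TP W →ₗ[ℂ] TP W) (p : OP W) :
    evA A (lsh p) = A (evA A p) := by
  rw [evA_apply, evA_apply, lsh, Finsupp.lmapDomain_apply,
    Finsupp.sum_mapDomain_index_inj (fun a b h => by omega), map_finsuppSum]
  exact Finsupp.sum_congr fun k _ => by rw [pow_succ', Module.End.mul_apply]

lemma evA1_lsh (A : OP W →ₗ[ℂ] OP W) (p : OP W) :
    evA1 A (lsh p) = A (evA1 A p) := by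
  rw [evA1_apply, evA1_apply, lsh, Finsupp.lmapDomain_apply,
    Finsupp.sum_mapDomain_index_inj (fun a b h => by omega), map_finsuppSum]
  exact Finsupp.sum_congr fun k _ => by rw [pow_succ', Module.End.mul_apply]

lemma evA_pD (A : TP W →ₗ[ℂ] TP W) (d : W →ₗ[ℂ] W)
    (h : ∀ q, A (PD d q) = PD d (A q)) (p : OP W) :
    evA A (pD d p) = PD d (evA A p) := by
  rw [evA_apply, evA_apply]
  simp only [pD, Finsupp.mapRange.linearMap_apply]
  rw [Finsupp.sum_mapRange_index (fun k => by simp), map_finsuppSum]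
  refine Finsupp.sum_congr fun k _ => ?_
  rw [← PD_single, pow_comm_apply (PD d) A A (fun q => (h q).symm)]

lemma evA1_pD (A : OP W →ₗ[ℂ] OP W) (d : W →ₗ[ℂ] W)
    (h : ∀ q, A (pD d q) = pD d (A q)) (p : OP W) :
    evA1 A (pD d p) = pD d (evA1 A p) := by
  rw [evA1_apply, evA1_apply,
    show pD d p = Finsupp.mapRange d (map_zero d) p from rfl,
    Finsupp.sum_mapRange_index (fun k => by simp), map_finsuppSum]
  refine Finsupp.sum_congr fun k _ => ?_
  rw [← pD_single, pow_comm_apply (pD d) A A (fun q => (h q).symm)]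

lemma evA_comp (A C : TP W →ₗ[ℂ] TP W) (B : OP W →ₗ[ℂ] OP W)
    (h : ∀ p, evA A (B p) = C (evA A p)) (q : OP W) :
    evA A (evA1 B q) = evA C q := by
  rw [evA1_apply, map_finsuppSum, evA_apply]
  refine Finsupp.sum_congr fun k _ => ?_
  rw [pow_comm_apply (evA A) B C h, evA_single, pow_zero, Module.End.one_apply]

lemma evA_nD (A : TP W →ₗ[ℂ] TP W) (d : W →ₗ[ℂ] W)
    (hA : ∀ q, A (PD d q) = PD d (A q)) (q : OP W) :
    evA A (evA1 (nD d) q) = evA (-A - PD d) q := by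
  refine evA_comp A _ (nD d) (fun p => ?_) q
  have : nD d p = -(lsh p) - pD d p := rfl
  rw [this, map_sub, map_neg, evA_lsh, evA_pD A d hA]
  simp [LinearMap.sub_apply, LinearMap.neg_apply]

lemma evA1_nD_lsh_pD (d : W →ₗ[ℂ] W) (p : OP W) :
    evA1 (nD d) (lsh p + pD d p) = -lsh (evA1 (nD d) p) := by
  have hc : ∀ q, nD d (pD d q) = pD d (nD d q) := by
    intro q
    simp only [nD, LinearMap.sub_apply, LinearMap.neg_apply, map_sub, map_neg, lsh_pD]
  rw [map_add, evA1_lsh, evA1_pD _ d hc]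
  have : nD d (evA1 (nD d) p) = -(lsh (evA1 (nD d) p)) - pD d (evA1 (nD d) p) := rfl
  rw [this]; abel

lemma evA1_nD_neg_lsh (d : W →ₗ[ℂ] W) (p : OP W) :
    evA1 (nD d) (-(lsh p)) = lsh (evA1 (nD d) p) + pD d (evA1 (nD d) p) := by
  rw [map_neg, evA1_lsh]
  have : nD d (evA1 (nD d) p) = -(lsh (evA1 (nD d) p)) - pD d (evA1 (nD d) p) := rfl
  rw [this]; abel

end GenHelpers
section ExHelpers

variable {U V W : Type*}
variable [AddCommGroup U] [Module ℂ U] [AddCommGroup V] [Module ℂ V]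
variable [AddCommGroup W] [Module ℂ W]

/-- `exL` as a linear map in the polynomial argument. -/
def exLm (n : U →ₗ[ℂ] V →ₗ[ℂ] OP W) (A : TP W →ₗ[ℂ] TP W) (v : V) : TP U →ₗ[ℂ] TP W :=
  Finsupp.lsum ℂ fun ij => (LX ^ ij.1) ∘ₗ (LY ^ ij.2) ∘ₗ evA A ∘ₗ (n.flip v)

lemma exL_eq (n : U →ₗ[ℂ] V →ₗ[ℂ] OP W) (A : TP W →ₗ[ℂ] TP W) (p : TP U) (v : V) :
    exL n A p v = exLm n A v p := by
  rw [exL, exLm, Finsupp.lsum_apply]; rfl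

/-- `exR` as a linear map in the polynomial argument. -/
def exRm (n : U →ₗ[ℂ] V →ₗ[ℂ] OP W) (A : TP W →ₗ[ℂ] TP W) (u : U) : TP V →ₗ[ℂ] TP W :=
  Finsupp.lsum ℂ fun ij => (LX ^ ij.1) ∘ₗ (LY ^ ij.2) ∘ₗ evA A ∘ₗ (n u)

lemma exR_eq (n : U →ₗ[ℂ] V →ₗ[ℂ] OP W) (A : TP W →ₗ[ℂ] TP W) (u : U) (p : TP V) :
    exR n A u p = exRm n A u p := by
  rw [exR, exRm, Finsupp.lsum_apply]; rfl

variable (n : U →ₗ[ℂ] V →ₗ[ℂ] OP W) (A : TP W →ₗ[ℂ] TP W)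

lemma exL_add_p (p q : TP U) (v : V) :
    exL n A (p + q) v = exL n A p v + exL n A q v := by
  simp only [exL_eq, map_add]

lemma exL_sub_p (p q : TP U) (v : V) :
    exL n A (p - q) v = exL n A p v - exL n A q v := by
  simp only [exL_eq, map_sub]

lemma exR_add_p (u : U) (p q : TP V) :
    exR n A u (p + q) = exR n A u p + exR n A u q := by
  simp only [exR_eq, map_add]

lemma exR_sub_p (u : U) (p q : TP V) :
    exR n A u (p - q) = exR n A u p - exR n A u q := by
  simp only [exR_eq, map_sub]

lemma exL_add_v (p : TP U) (v₁ v₂ : V) :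
    exL n A p (v₁ + v₂) = exL n A p v₁ + exL n A p v₂ := by
  simp only [exL, ← Finsupp.sum_add]
  exact Finsupp.sum_congr fun ij _ => by simp [map_add]

lemma exR_add_u (u₁ u₂ : U) (p : TP V) :
    exR n A (u₁ + u₂) p = exR n A u₁ p + exR n A u₂ p := by
  simp only [exR, ← Finsupp.sum_add]
  exact Finsupp.sum_congr fun ij _ => by simp [map_add]

lemma exL_single (ij : ℕ × ℕ) (u : U) (v : V) :
    exL n A (Finsupp.single ij u) v = (LX ^ ij.1) ((LY ^ ij.2) (evA A (n u v))) := by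
  simp only [exL]
  rw [Finsupp.sum_single_index]
  simp

lemma exR_single (u : U) (ij : ℕ × ℕ) (v : V) :
    exR n A u (Finsupp.single ij v) = (LX ^ ij.1) ((LY ^ ij.2) (evA A (n u v))) := by
  simp only [exR]
  rw [Finsupp.sum_single_index]
  simp

lemma exL_push_LX (P : TP U) (v : V) :
    exL n A (LX P) v = LX (exL n A P v) := by
  simp only [exL]
  rw [show LX P = Finsupp.mapDomain (fun q : ℕ × ℕ => (q.1 + 1, q.2)) P from rfl,
    Finsupp.sum_mapDomain_index_inj (fun a b h => by cases a; cases b; simp_all [Prod.ext_iff]),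
    map_finsuppSum]
  exact Finsupp.sum_congr fun ij _ => by rw [pow_succ', Module.End.mul_apply]

lemma exL_push_LY (P : TP U) (v : V) :
    exL n A (LY P) v = LY (exL n A P v) := by
  simp only [exL]
  rw [show LY P = Finsupp.mapDomain (fun q : ℕ × ℕ => (q.1, q.2 + 1)) P from rfl,
    Finsupp.sum_mapDomain_index_inj (fun a b h => by cases a; cases b; simp_all [Prod.ext_iff]),
    map_finsuppSum]
  refine Finsupp.sum_congr fun ij _ => ?_
  rw [pow_comm_apply LY LX LX (fun q => (LX_LY q).symm), pow_succ', Module.End.mul_apply]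

lemma exR_push_LX (u : U) (P : TP V) :
    exR n A u (LX P) = LX (exR n A u P) := by
  simp only [exR]
  rw [show LX P = Finsupp.mapDomain (fun q : ℕ × ℕ => (q.1 + 1, q.2)) P from rfl,
    Finsupp.sum_mapDomain_index_inj (fun a b h => by cases a; cases b; simp_all [Prod.ext_iff]),
    map_finsuppSum]
  exact Finsupp.sum_congr fun ij _ => by rw [pow_succ', Module.End.mul_apply]

lemma exR_push_LY (u : U) (P : TP V) :
    exR n A u (LY P) = LY (exR n A u P) := by
  simp only [exR]
  rw [show LY P = Finsupp.mapDomain (fun q : ℕ × ℕ => (q.1, q.2 + 1)) P from rfl,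
    Finsupp.sum_mapDomain_index_inj (fun a b h => by cases a; cases b; simp_all [Prod.ext_iff]),
    map_finsuppSum]
  refine Finsupp.sum_congr fun ij _ => ?_
  rw [pow_comm_apply LY LX LX (fun q => (LX_LY q).symm), pow_succ', Module.End.mul_apply]

lemma exL_push_PD {dU : U →ₗ[ℂ] U} (dl : ∀ u v, n (dU u) v = -lsh (n u v))
    (hAX : ∀ q, A (LX q) = LX (A q)) (hAY : ∀ q, A (LY q) = LY (A q))
    (P : TP U) (v : V) :
    exL n A (PD dU P) v = (-A) (exL n A P v) := by
  simp only [exL]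
  rw [show PD dU P = Finsupp.mapRange dU (map_zero dU) P from rfl,
    Finsupp.sum_mapRange_index (fun a => by simp), map_finsuppSum]
  refine Finsupp.sum_congr fun ij _ => ?_
  rw [dl, map_neg, evA_lsh]
  simp only [LinearMap.neg_apply, map_neg, neg_inj]
  rw [pow_comm_apply A LX LX hAX, pow_comm_apply A LY LY hAY]

lemma exR_push_PD {dV : V →ₗ[ℂ] V} {dW : W →ₗ[ℂ] W}
    (dr : ∀ u v, n u (dV v) = lsh (n u v) + pD dW (n u v))
    (hAX : ∀ q, A (LX q) = LX (A q)) (hAY : ∀ q, A (LY q) = LY (A q))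
    (hAP : ∀ q, A (PD dW q) = PD dW (A q))
    (u : U) (P : TP V) :
    exR n A u (PD dV P) = (A + PD dW) (exR n A u P) := by
  simp only [exR]
  rw [show PD dV P = Finsupp.mapRange dV (map_zero dV) P from rfl,
    Finsupp.sum_mapRange_index (fun a => by simp), map_finsuppSum]
  refine Finsupp.sum_congr fun ij _ => ?_
  rw [dr, map_add, evA_lsh, evA_pD A dW hAP]
  simp only [LinearMap.add_apply, map_add]
  rw [pow_comm_apply A LX LX hAX, pow_comm_apply A LY LY hAY,
    pow_comm_apply (PD dW) LX LX (fun q => (LX_PD dW q).symm),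
    pow_comm_apply (PD dW) LY LY (fun q => (LY_PD dW q).symm)]

lemma exL_evA {B : TP U →ₗ[ℂ] TP U} {D : TP W →ₗ[ℂ] TP W} {v : V}
    (hB : ∀ P, exL n A (B P) v = D (exL n A P v)) (q : OP U) :
    exL n A (evA B q) v = q.sum fun k u => (D ^ k) (evA A (n u v)) := by
  rw [exL_eq, evA_apply, map_finsuppSum]
  refine Finsupp.sum_congr fun k _ => ?_
  rw [pow_comm_apply (exLm n A v) B D (fun P => by rw [← exL_eq, ← exL_eq, hB]),
    ← exL_eq, exL_single]
  simp

lemma exR_evA {B : TP V →ₗ[ℂ] TP V} {D : TP W →ₗ[ℂ] TP W} {u : U}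
    (hB : ∀ P, exR n A u (B P) = D (exR n A u P)) (q : OP V) :
    exR n A u (evA B q) = q.sum fun k v => (D ^ k) (evA A (n u v)) := by
  rw [exR_eq, evA_apply, map_finsuppSum]
  refine Finsupp.sum_congr fun k _ => ?_
  rw [pow_comm_apply (exRm n A u) B D (fun P => by rw [← exR_eq, ← exR_eq, hB]),
    ← exR_eq, exR_single]
  simp

end ExHelpers
section ProdHelpers

variable {R Q : Type*} [AddCommGroup R] [Module ℂ R] [AddCommGroup Q] [Module ℂ Q]

/-- Embedding of `R`-valued two-variable polynomials. -/
def inlT (R Q : Type*) [AddCommGroup R] [Module ℂ R] [AddCommGroup Q] [Module ℂ Q] :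
    TP R →ₗ[ℂ] TP (R × Q) := Finsupp.mapRange.linearMap (LinearMap.inl ℂ R Q)

def inrT (R Q : Type*) [AddCommGroup R] [Module ℂ R] [AddCommGroup Q] [Module ℂ Q] :
    TP Q →ₗ[ℂ] TP (R × Q) := Finsupp.mapRange.linearMap (LinearMap.inr ℂ R Q)

def prT1 (R Q : Type*) [AddCommGroup R] [Module ℂ R] [AddCommGroup Q] [Module ℂ Q] :
    TP (R × Q) →ₗ[ℂ] TP R := Finsupp.mapRange.linearMap (LinearMap.fst ℂ R Q)

def prT2 (R Q : Type*) [AddCommGroup R] [Module ℂ R] [AddCommGroup Q] [Module ℂ Q] :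
    TP (R × Q) →ₗ[ℂ] TP Q := Finsupp.mapRange.linearMap (LinearMap.snd ℂ R Q)

lemma prT1_inlT (p : TP R) : prT1 R Q (inlT R Q p) = p := by
  ext a; simp [prT1, inlT]

lemma prT1_inrT (q : TP Q) : prT1 R Q (inrT R Q q) = 0 := by
  ext a; simp [prT1, inrT]

lemma prT2_inlT (p : TP R) : prT2 R Q (inlT R Q p) = 0 := by
  ext a; simp [prT2, inlT]

lemma prT2_inrT (q : TP Q) : prT2 R Q (inrT R Q q) = q := by
  ext a; simp [prT2, inrT]

lemma inl_inr_eq_iff (p p' : TP R) (q q' : TP Q) :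
    inlT R Q p + inrT R Q q = inlT R Q p' + inrT R Q q' ↔ p = p' ∧ q = q' := by
  constructor
  · intro h
    constructor
    · have := congrArg (prT1 R Q) h
      simpa [map_add, prT1_inlT, prT1_inrT] using this
    · have := congrArg (prT2 R Q) h
      simpa [map_add, prT2_inlT, prT2_inrT] using this
  · rintro ⟨rfl, rfl⟩; rfl

lemma LX_inlT (p : TP R) : LX (inlT R Q p) = inlT R Q (LX p) :=
  (mapRange_lmapDomain (LinearMap.inl ℂ R Q) _ p).symm

lemma LY_inlT (p : TP R) : LY (inlT R Q p) = inlT R Q (LY p) :=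
  (mapRange_lmapDomain (LinearMap.inl ℂ R Q) _ p).symm

lemma LX_inrT (q : TP Q) : LX (inrT R Q q) = inrT R Q (LX q) :=
  (mapRange_lmapDomain (LinearMap.inr ℂ R Q) _ q).symm

lemma LY_inrT (q : TP Q) : LY (inrT R Q q) = inrT R Q (LY q) :=
  (mapRange_lmapDomain (LinearMap.inr ℂ R Q) _ q).symm

lemma LXY_inlT (p : TP R) :
    (LX + LY : TP (R × Q) →ₗ[ℂ] TP (R × Q)) (inlT R Q p)
      = inlT R Q ((LX + LY : TP R →ₗ[ℂ] TP R) p) := by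
  simp only [LinearMap.add_apply, map_add, LX_inlT, LY_inlT]

lemma LXY_inrT (q : TP Q) :
    (LX + LY : TP (R × Q) →ₗ[ℂ] TP (R × Q)) (inrT R Q q)
      = inrT R Q ((LX + LY : TP Q →ₗ[ℂ] TP Q) q) := by
  simp only [LinearMap.add_apply, map_add, LX_inrT, LY_inrT]

lemma inlP_lsh (p : OP R) : inlP R Q (lsh p) = lsh (inlP R Q p) :=
  mapRange_lmapDomain (LinearMap.inl ℂ R Q) _ p

lemma inrP_lsh (q : OP Q) : inrP R Q (lsh q) = lsh (inrP R Q q) :=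
  mapRange_lmapDomain (LinearMap.inr ℂ R Q) _ q

variable (dR : R →ₗ[ℂ] R) (dQ : Q →ₗ[ℂ] Q)

lemma inlP_pD (p : OP R) :
    inlP R Q (pD dR p) = pD (dR.prodMap dQ) (inlP R Q p) := by
  ext a <;> simp [inlP, pD]

lemma inrP_pD (q : OP Q) :
    inrP R Q (pD dQ q) = pD (dR.prodMap dQ) (inrP R Q q) := by
  ext a <;> simp [inrP, pD]

-- evA embedding lemmas
lemma evA_embed {A_E : TP (R × Q) →ₗ[ℂ] TP (R × Q)} {A_R : TP R →ₗ[ℂ] TP R}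
    (h : ∀ q, A_E (inlT R Q q) = inlT R Q (A_R q)) (p : OP R) :
    evA A_E (inlP R Q p) = inlT R Q (evA A_R p) := by
  rw [evA_apply, evA_apply,
    show inlP R Q p = Finsupp.mapRange (LinearMap.inl ℂ R Q) (map_zero _) p from rfl,
    Finsupp.sum_mapRange_index (fun a => by simp), map_finsuppSum]
  refine Finsupp.sum_congr fun k _ => ?_
  rw [show (Finsupp.single ((0,0) : ℕ × ℕ) ((LinearMap.inl ℂ R Q) (p k)) : TP (R × Q))
      = inlT R Q (Finsupp.single ((0,0) : ℕ × ℕ) (p k)) from by simp [inlT],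
    pow_comm_apply (inlT R Q) A_R A_E (fun q => (h q).symm)]

lemma evA_embedR {A_E : TP (R × Q) →ₗ[ℂ] TP (R × Q)} {A_Q : TP Q →ₗ[ℂ] TP Q}
    (h : ∀ q, A_E (inrT R Q q) = inrT R Q (A_Q q)) (p : OP Q) :
    evA A_E (inrP R Q p) = inrT R Q (evA A_Q p) := by
  rw [evA_apply, evA_apply,
    show inrP R Q p = Finsupp.mapRange (LinearMap.inr ℂ R Q) (map_zero _) p from rfl,
    Finsupp.sum_mapRange_index (fun a => by simp), map_finsuppSum]
  refine Finsupp.sum_congr fun k _ => ?_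
  rw [show (Finsupp.single ((0,0) : ℕ × ℕ) ((LinearMap.inr ℂ R Q) (p k)) : TP (R × Q))
      = inrT R Q (Finsupp.single ((0,0) : ℕ × ℕ) (p k)) from by simp [inrT],
    pow_comm_apply (inrT R Q) A_Q A_E (fun q => (h q).symm)]

lemma evA_LX_inl (p : OP R) : evA LX (inlP R Q p) = inlT R Q (evA LX p) :=
  evA_embed (fun q => LX_inlT q) p

lemma evA_LY_inl (p : OP R) : evA LY (inlP R Q p) = inlT R Q (evA LY p) :=
  evA_embed (fun q => LY_inlT q) p

lemma evA_LXY_inl (p : OP R) : evA (LX + LY) (inlP R Q p) = inlT R Q (evA (LX + LY) p) :=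
  evA_embed (fun q => LXY_inlT q) p

lemma evA_LX_inr (p : OP Q) : evA LX (inrP R Q p) = inrT R Q (evA LX p) :=
  evA_embedR (fun q => LX_inrT q) p

lemma evA_LY_inr (p : OP Q) : evA LY (inrP R Q p) = inrT R Q (evA LY p) :=
  evA_embedR (fun q => LY_inrT q) p

lemma evA_LXY_inr (p : OP Q) : evA (LX + LY) (inrP R Q p) = inrT R Q (evA (LX + LY) p) :=
  evA_embedR (fun q => LXY_inrT q) p

-- commutation of PD with LX, LY, LX+LY (pointwise, for use in evA_nD)
lemma LXY_PD {W : Type*} [AddCommGroup W] [Module ℂ W] (d : W →ₗ[ℂ] W) (q : TP W) :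
    (LX + LY : TP W →ₗ[ℂ] TP W) (PD d q) = PD d ((LX + LY : TP W →ₗ[ℂ] TP W) q) := by
  simp only [LinearMap.add_apply, map_add, LX_PD, LY_PD]

lemma nXY_eq {W : Type*} [AddCommGroup W] [Module ℂ W] (d : W →ₗ[ℂ] W) :
    -(LX + LY) - PD d = nXY (dW := d) := by
  rw [nXY]; abel

lemma evA_nX (d : R →ₗ[ℂ] R) (p : OP R) :
    evA LX (evA1 (nD d) p) = evA (nX d) p := by
  rw [evA_nD LX d (LX_PD d) p]; rfl

lemma evA_nY (d : R →ₗ[ℂ] R) (p : OP R) :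
    evA LY (evA1 (nD d) p) = evA (nY d) p := by
  rw [evA_nD LY d (LY_PD d) p]; rfl

lemma evA_nXY (d : R →ₗ[ℂ] R) (p : OP R) :
    evA (LX + LY) (evA1 (nD d) p) = evA (nXY d) p := by
  rw [evA_nD (LX + LY) d (LXY_PD d) p, nXY_eq]

end ProdHelpers

section SfunHelpers

variable {L : Type*} [AddCommGroup L] [Module ℂ L]

/-- The left-symmetry defect. -/
def Sfun (M : L →ₗ[ℂ] L →ₗ[ℂ] OP L) (e1 e2 e3 : L) : TP L :=
  exL M (LX + LY) (ev2 M LX e1 e2) e3 - exR M LX e1 (ev2 M LY e2 e3)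
    - exL M (LX + LY) (ev2 M LY e2 e1) e3 + exR M LY e2 (ev2 M LX e1 e3)

lemma lsym_iff_Sfun (M : L →ₗ[ℂ] L →ₗ[ℂ] OP L) :
    (∀ a b c : L,
      exL M (LX + LY) (ev2 M LX a b) c - exR M LX a (ev2 M LY b c)
        = exL M (LX + LY) (ev2 M LY b a) c - exR M LY b (ev2 M LX a c))
    ↔ ∀ a b c : L, Sfun M a b c = 0 := by
  refine forall_congr' fun a => forall_congr' fun b => forall_congr' fun c => ?_
  rw [show Sfun M a b c
      = (exL M (LX + LY) (ev2 M LX a b) c - exR M LX a (ev2 M LY b c))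
        - (exL M (LX + LY) (ev2 M LY b a) c - exR M LY b (ev2 M LX a c)) from by
          rw [Sfun]; abel, sub_eq_zero]


lemma Sfun_add1 (M : L →ₗ[ℂ] L →ₗ[ℂ] OP L) (a a' b c : L) :
    Sfun M (a + a') b c = Sfun M a b c + Sfun M a' b c := by
  simp only [Sfun, ev2, map_add, LinearMap.add_apply, exL_add_p, exR_add_u, exR_add_p]
  abel

lemma Sfun_add2 (M : L →ₗ[ℂ] L →ₗ[ℂ] OP L) (a b b' c : L) :
    Sfun M a (b + b') c = Sfun M a b c + Sfun M a b' c := by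
  simp only [Sfun, ev2, map_add, LinearMap.add_apply, exL_add_p, exR_add_u, exR_add_p]
  abel

lemma Sfun_add3 (M : L →ₗ[ℂ] L →ₗ[ℂ] OP L) (a b c c' : L) :
    Sfun M a b (c + c') = Sfun M a b c + Sfun M a b c' := by
  simp only [Sfun, ev2, map_add, LinearMap.add_apply, exL_add_v, exR_add_p]
  abel

end SfunHelpers
section SwapHelpers

variable {U V W : Type*}
variable [AddCommGroup U] [Module ℂ U] [AddCommGroup V] [Module ℂ V]
variable [AddCommGroup W] [Module ℂ W]

/-- Swapping the two variables λ ↔ μ. -/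
def swT : TP W →ₗ[ℂ] TP W := Finsupp.lmapDomain W ℂ Prod.swap

lemma swT_single (p : ℕ × ℕ) (w : W) :
    swT (Finsupp.single p w) = Finsupp.single p.swap w := by
  simp [swT, Finsupp.mapDomain_single]

lemma swT_LX (q : TP W) : swT (LX q) = LY (swT q) := by
  induction q using Finsupp.induction_linear with
  | zero => simp
  | add a b ha hb => simp only [map_add, ha, hb]
  | single a b => simp [swT, LX, LY, Finsupp.mapDomain_single, Prod.swap]

lemma swT_LY (q : TP W) : swT (LY q) = LX (swT q) := by
  induction q using Finsupp.induction_linear with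
  | zero => simp
  | add a b ha hb => simp only [map_add, ha, hb]
  | single a b => simp [swT, LX, LY, Finsupp.mapDomain_single, Prod.swap]

lemma swT_LXY (q : TP W) :
    swT ((LX + LY : TP W →ₗ[ℂ] TP W) q) = (LX + LY : TP W →ₗ[ℂ] TP W) (swT q) := by
  simp only [LinearMap.add_apply, map_add, swT_LX, swT_LY]
  abel

lemma pow_pow_comm (i j : ℕ) (z : TP W) :
    (LX ^ i) ((LY ^ j) z) = (LY ^ j) ((LX ^ i) z) :=
  (pow_comm_apply (LX ^ i) LY LY
    (fun q => (pow_comm_apply LY LX LX (fun r => (LX_LY r).symm) i q).symm) j z)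

lemma swT_evA {A B : TP W →ₗ[ℂ] TP W} (h : ∀ q, swT (A q) = B (swT q)) (p : OP W) :
    swT (evA A p) = evA B p := by
  rw [evA_apply, evA_apply, map_finsuppSum]
  refine Finsupp.sum_congr fun k _ => ?_
  rw [pow_comm_apply swT A B h, swT_single]
  rfl

lemma swT_exL (n : U →ₗ[ℂ] V →ₗ[ℂ] OP W) {A B : TP W →ₗ[ℂ] TP W}
    (h : ∀ q, swT (A q) = B (swT q)) (P : TP U) (v : V) :
    swT (exL n A P v) = exL n B (swT P) v := by
  simp only [exL]
  rw [show swT P = Finsupp.mapDomain Prod.swap P from rfl,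
    Finsupp.sum_mapDomain_index_inj Prod.swap_injective, map_finsuppSum]
  refine Finsupp.sum_congr fun ij _ => ?_
  rw [pow_comm_apply swT LX LY swT_LX, pow_comm_apply swT LY LX swT_LY,
    swT_evA h, Prod.fst_swap, Prod.snd_swap, pow_pow_comm]

lemma swT_exR (n : U →ₗ[ℂ] V →ₗ[ℂ] OP W) {A B : TP W →ₗ[ℂ] TP W}
    (h : ∀ q, swT (A q) = B (swT q)) (u : U) (P : TP V) :
    swT (exR n A u P) = exR n B u (swT P) := by
  simp only [exR]
  rw [show swT P = Finsupp.mapDomain Prod.swap P from rfl,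
    Finsupp.sum_mapDomain_index_inj Prod.swap_injective, map_finsuppSum]
  refine Finsupp.sum_congr fun ij _ => ?_
  rw [pow_comm_apply swT LX LY swT_LX, pow_comm_apply swT LY LX swT_LY,
    swT_evA h, Prod.fst_swap, Prod.snd_swap, pow_pow_comm]

lemma swT_ev2 (M : U →ₗ[ℂ] V →ₗ[ℂ] OP W) {A B : TP W →ₗ[ℂ] TP W}
    (h : ∀ q, swT (A q) = B (swT q)) (u : U) (v : V) :
    swT (ev2 M A u v) = ev2 M B u v :=
  swT_evA h _

end SwapHelpers

section SfunSwap

variable {L : Type*} [AddCommGroup L] [Module ℂ L]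

lemma Sfun_swap (M : L →ₗ[ℂ] L →ₗ[ℂ] OP L) (a b c : L) :
    Sfun M b a c = -swT (Sfun M a b c) := by
  rw [Sfun, Sfun]
  simp only [map_sub, map_add,
    swT_exL M swT_LXY, swT_exR M swT_LX, swT_exR M swT_LY,
    swT_ev2 M swT_LX, swT_ev2 M swT_LY]
  abel

end SfunSwap
section UprodBlocks

variable {R Q : Type*} [AddCommGroup R] [Module ℂ R] [AddCommGroup Q] [Module ℂ Q]
variable (dR : R →ₗ[ℂ] R) (dQ : Q →ₗ[ℂ] Q) (Ω : ExtDatum dR dQ) (m : R →ₗ[ℂ] R →ₗ[ℂ] OP R)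

lemma inlT_pow_LX (i : ℕ) (q : TP R) :
    (LX ^ i) (inlT R Q q) = inlT R Q ((LX ^ i) q) :=
  (pow_comm_apply (inlT R Q) LX LX (fun q => (LX_inlT q).symm) i q).symm

lemma inlT_pow_LY (j : ℕ) (q : TP R) :
    (LY ^ j) (inlT R Q q) = inlT R Q ((LY ^ j) q) :=
  (pow_comm_apply (inlT R Q) LY LY (fun q => (LY_inlT q).symm) j q).symm

lemma inrT_pow_LX (i : ℕ) (q : TP Q) :
    (LX ^ i) (inrT R Q q) = inrT R Q ((LX ^ i) q) :=
  (pow_comm_apply (inrT R Q) LX LX (fun q => (LX_inrT q).symm) i q).symm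

lemma inrT_pow_LY (j : ℕ) (q : TP Q) :
    (LY ^ j) (inrT R Q q) = inrT R Q ((LY ^ j) q) :=
  (pow_comm_apply (inrT R Q) LY LY (fun q => (LY_inrT q).symm) j q).symm

lemma uprod_rq (a : R) (y : Q) :
    uprod dR dQ Ω m (a, 0) (0, y)
      = inlP R Q (evA1 (nD dR) (Ω.psi y a)) + inrP R Q (Ω.l a y) := by
  rw [uprod_apply]; simp

lemma uprod_qr (x : Q) (b : R) :
    uprod dR dQ Ω m (0, x) (b, 0)
      = inlP R Q (Ω.phi x b) + inrP R Q (evA1 (nD dQ) (Ω.r b x)) := by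
  rw [uprod_apply]; simp

lemma uprod_qq (x y : Q) :
    uprod dR dQ Ω m (0, x) (0, y)
      = inlP R Q (Ω.g x y) + inrP R Q (Ω.o x y) := by
  rw [uprod_apply]; simp

variable {AE : TP (R × Q) →ₗ[ℂ] TP (R × Q)} {AR : TP R →ₗ[ℂ] TP R} {AQ : TP Q →ₗ[ℂ] TP Q}
variable {nAR : TP R →ₗ[ℂ] TP R} {nAQ : TP Q →ₗ[ℂ] TP Q}

section Blocks

variable (hIl : ∀ p : OP R, evA AE (inlP R Q p) = inlT R Q (evA AR p))
variable (hIr : ∀ q : OP Q, evA AE (inrP R Q q) = inrT R Q (evA AQ q))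
variable (hNl : ∀ p : OP R, evA AE (inlP R Q (evA1 (nD dR) p)) = inlT R Q (evA nAR p))
variable (hNr : ∀ q : OP Q, evA AE (inrP R Q (evA1 (nD dQ) q)) = inrT R Q (evA nAQ q))

include hIl in
lemma ev2U_rr (a b : R) :
    ev2 (uprod dR dQ Ω m) AE (a, 0) (b, 0) = inlT R Q (ev2 m AR a b) := by
  rw [ev2, uprod_res, hIl]; rfl

include hNl hIr in
lemma ev2U_rq (a : R) (y : Q) :
    ev2 (uprod dR dQ Ω m) AE (a, 0) (0, y)
      = inlT R Q (ev2 Ω.psi nAR y a) + inrT R Q (ev2 Ω.l AQ a y) := by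
  rw [ev2, uprod_rq, map_add, hNl, hIr]; rfl

include hIl hNr in
lemma ev2U_qr (x : Q) (b : R) :
    ev2 (uprod dR dQ Ω m) AE (0, x) (b, 0)
      = inlT R Q (ev2 Ω.phi AR x b) + inrT R Q (ev2 Ω.r nAQ b x) := by
  rw [ev2, uprod_qr, map_add, hIl, hNr]; rfl

include hIl hIr in
lemma ev2U_qq (x y : Q) :
    ev2 (uprod dR dQ Ω m) AE (0, x) (0, y)
      = inlT R Q (ev2 Ω.g AR x y) + inrT R Q (ev2 Ω.o AQ x y) := by
  rw [ev2, uprod_qq, map_add, hIl, hIr]; rfl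

include hIl in
lemma exLU_lr (P : TP R) (b : R) :
    exL (uprod dR dQ Ω m) AE (inlT R Q P) (b, 0) = inlT R Q (exL m AR P b) := by
  simp only [exL]
  rw [show inlT R Q P = Finsupp.mapRange (LinearMap.inl ℂ R Q) (map_zero _) P from rfl,
    Finsupp.sum_mapRange_index (fun a => by simp), map_finsuppSum]
  refine Finsupp.sum_congr fun ij _ => ?_
  rw [show (LinearMap.inl ℂ R Q) (P ij) = ((P ij, 0) : R × Q) from rfl, uprod_res, hIl,
    inlT_pow_LY, inlT_pow_LX]

include hNl hIr in
lemma exLU_lq (P : TP R) (y : Q) :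
    exL (uprod dR dQ Ω m) AE (inlT R Q P) (0, y)
      = inlT R Q (exR Ω.psi nAR y P) + inrT R Q (exL Ω.l AQ P y) := by
  simp only [exL, exR]
  rw [show inlT R Q P = Finsupp.mapRange (LinearMap.inl ℂ R Q) (map_zero _) P from rfl,
    Finsupp.sum_mapRange_index (fun a => by simp), map_finsuppSum, map_finsuppSum,
    ← Finsupp.sum_add]
  refine Finsupp.sum_congr fun ij _ => ?_
  rw [show (LinearMap.inl ℂ R Q) (P ij) = ((P ij, 0) : R × Q) from rfl, uprod_rq,
    map_add, hNl, hIr]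
  simp only [map_add, inlT_pow_LY, inlT_pow_LX, inrT_pow_LY, inrT_pow_LX]

include hIl hNr in
lemma exLU_qr (P : TP Q) (b : R) :
    exL (uprod dR dQ Ω m) AE (inrT R Q P) (b, 0)
      = inlT R Q (exL Ω.phi AR P b) + inrT R Q (exR Ω.r nAQ b P) := by
  simp only [exL, exR]
  rw [show inrT R Q P = Finsupp.mapRange (LinearMap.inr ℂ R Q) (map_zero _) P from rfl,
    Finsupp.sum_mapRange_index (fun a => by simp), map_finsuppSum, map_finsuppSum,
    ← Finsupp.sum_add]
  refine Finsupp.sum_congr fun ij _ => ?_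
  rw [show (LinearMap.inr ℂ R Q) (P ij) = ((0, P ij) : R × Q) from rfl, uprod_qr,
    map_add, hIl, hNr]
  simp only [map_add, inlT_pow_LY, inlT_pow_LX, inrT_pow_LY, inrT_pow_LX]

include hIl hIr in
lemma exLU_qq (P : TP Q) (y : Q) :
    exL (uprod dR dQ Ω m) AE (inrT R Q P) (0, y)
      = inlT R Q (exL Ω.g AR P y) + inrT R Q (exL Ω.o AQ P y) := by
  simp only [exL]
  rw [show inrT R Q P = Finsupp.mapRange (LinearMap.inr ℂ R Q) (map_zero _) P from rfl,
    Finsupp.sum_mapRange_index (fun a => by simp), map_finsuppSum, map_finsuppSum,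
    ← Finsupp.sum_add]
  refine Finsupp.sum_congr fun ij _ => ?_
  rw [show (LinearMap.inr ℂ R Q) (P ij) = ((0, P ij) : R × Q) from rfl, uprod_qq,
    map_add, hIl, hIr]
  simp only [map_add, inlT_pow_LY, inlT_pow_LX, inrT_pow_LY, inrT_pow_LX]

include hIl in
lemma exRU_rl (a : R) (P : TP R) :
    exR (uprod dR dQ Ω m) AE (a, 0) (inlT R Q P) = inlT R Q (exR m AR a P) := by
  simp only [exR]
  rw [show inlT R Q P = Finsupp.mapRange (LinearMap.inl ℂ R Q) (map_zero _) P from rfl,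
    Finsupp.sum_mapRange_index (fun a => by simp), map_finsuppSum]
  refine Finsupp.sum_congr fun ij _ => ?_
  rw [show (LinearMap.inl ℂ R Q) (P ij) = ((P ij, 0) : R × Q) from rfl, uprod_res, hIl,
    inlT_pow_LY, inlT_pow_LX]

include hNl hIr in
lemma exRU_rq (a : R) (P : TP Q) :
    exR (uprod dR dQ Ω m) AE (a, 0) (inrT R Q P)
      = inlT R Q (exL Ω.psi nAR P a) + inrT R Q (exR Ω.l AQ a P) := by
  simp only [exL, exR]
  rw [show inrT R Q P = Finsupp.mapRange (LinearMap.inr ℂ R Q) (map_zero _) P from rfl,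
    Finsupp.sum_mapRange_index (fun a => by simp), map_finsuppSum, map_finsuppSum,
    ← Finsupp.sum_add]
  refine Finsupp.sum_congr fun ij _ => ?_
  rw [show (LinearMap.inr ℂ R Q) (P ij) = ((0, P ij) : R × Q) from rfl, uprod_rq,
    map_add, hNl, hIr]
  simp only [map_add, inlT_pow_LY, inlT_pow_LX, inrT_pow_LY, inrT_pow_LX]

include hIl hNr in
lemma exRU_ql (x : Q) (P : TP R) :
    exR (uprod dR dQ Ω m) AE (0, x) (inlT R Q P)
      = inlT R Q (exR Ω.phi AR x P) + inrT R Q (exL Ω.r nAQ P x) := by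
  simp only [exL, exR]
  rw [show inlT R Q P = Finsupp.mapRange (LinearMap.inl ℂ R Q) (map_zero _) P from rfl,
    Finsupp.sum_mapRange_index (fun a => by simp), map_finsuppSum, map_finsuppSum,
    ← Finsupp.sum_add]
  refine Finsupp.sum_congr fun ij _ => ?_
  rw [show (LinearMap.inl ℂ R Q) (P ij) = ((P ij, 0) : R × Q) from rfl, uprod_qr,
    map_add, hIl, hNr]
  simp only [map_add, inlT_pow_LY, inlT_pow_LX, inrT_pow_LY, inrT_pow_LX]

include hIl hIr in
lemma exRU_qq (x : Q) (P : TP Q) :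
    exR (uprod dR dQ Ω m) AE (0, x) (inrT R Q P)
      = inlT R Q (exR Ω.g AR x P) + inrT R Q (exR Ω.o AQ x P) := by
  simp only [exR]
  rw [show inrT R Q P = Finsupp.mapRange (LinearMap.inr ℂ R Q) (map_zero _) P from rfl,
    Finsupp.sum_mapRange_index (fun a => by simp), map_finsuppSum, map_finsuppSum,
    ← Finsupp.sum_add]
  refine Finsupp.sum_congr fun ij _ => ?_
  rw [show (LinearMap.inr ℂ R Q) (P ij) = ((0, P ij) : R × Q) from rfl, uprod_qq,
    map_add, hIl, hIr]
  simp only [map_add, inlT_pow_LY, inlT_pow_LX, inrT_pow_LY, inrT_pow_LX]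

end Blocks

-- hypothesis instances
lemma hNl_LX (p : OP R) :
    evA LX (inlP R Q (evA1 (nD dR) p)) = inlT R Q (evA (nX dR) p) := by
  rw [evA_LX_inl, evA_nX]

lemma hNl_LY (p : OP R) :
    evA LY (inlP R Q (evA1 (nD dR) p)) = inlT R Q (evA (nY dR) p) := by
  rw [evA_LY_inl, evA_nY]

lemma hNl_LXY (p : OP R) :
    evA (LX + LY) (inlP R Q (evA1 (nD dR) p)) = inlT R Q (evA (nXY dR) p) := by
  rw [evA_LXY_inl, evA_nXY]

lemma hNr_LX (q : OP Q) :
    evA LX (inrP R Q (evA1 (nD dQ) q)) = inrT R Q (evA (nX dQ) q) := by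
  rw [evA_LX_inr, evA_nX]

lemma hNr_LY (q : OP Q) :
    evA LY (inrP R Q (evA1 (nD dQ) q)) = inrT R Q (evA (nY dQ) q) := by
  rw [evA_LY_inr, evA_nY]

lemma hNr_LXY (q : OP Q) :
    evA (LX + LY) (inrP R Q (evA1 (nD dQ) q)) = inrT R Q (evA (nXY dQ) q) := by
  rw [evA_LXY_inr, evA_nXY]

/-- The unified product is always conformal bilinear. -/
lemma uprod_confBilin (hm : ConfBilin dR dR dR m) :
    ConfBilin (dR.prodMap dQ) (dR.prodMap dQ) (dR.prodMap dQ) (uprod dR dQ Ω m) := by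
  constructor
  · intro u v
    rw [uprod_apply, uprod_apply]
    simp only [LinearMap.prodMap_apply]
    rw [hm.dleft, Ω.hphi.dleft, Ω.hpsi.dright, Ω.hg.dleft, Ω.ho.dleft, Ω.hl.dleft,
      Ω.hr.dright, evA1_nD_lsh_pD, evA1_nD_lsh_pD]
    simp only [map_add, map_neg, inlP_lsh, inrP_lsh]
    abel
  · intro u v
    rw [uprod_apply, uprod_apply]
    simp only [LinearMap.prodMap_apply]
    rw [hm.dright, Ω.hphi.dright, Ω.hpsi.dleft, Ω.hg.dright, Ω.ho.dright, Ω.hl.dright,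
      Ω.hr.dleft, evA1_nD_neg_lsh, evA1_nD_neg_lsh]
    simp only [map_add, map_neg, inlP_lsh, inrP_lsh, ← inlP_pD dR dQ, ← inrP_pD dR dQ]
    abel

end UprodBlocks
section Transports

variable {U V W : Type*}
variable [AddCommGroup U] [Module ℂ U] [AddCommGroup V] [Module ℂ V]
variable [AddCommGroup W] [Module ℂ W]

lemma LXY_LX (q : TP W) :
    (LX + LY : TP W →ₗ[ℂ] TP W) (LX q) = LX ((LX + LY : TP W →ₗ[ℂ] TP W) q) := by
  simp only [LinearMap.add_apply, map_add, LX_LY]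

lemma LXY_LY (q : TP W) :
    (LX + LY : TP W →ₗ[ℂ] TP W) (LY q) = LY ((LX + LY : TP W →ₗ[ℂ] TP W) q) := by
  simp only [LinearMap.add_apply, map_add, LX_LY]

lemma nXY_LX (d : W →ₗ[ℂ] W) (q : TP W) : (nXY d) (LX q) = LX ((nXY d) q) := by
  simp only [nXY, LinearMap.sub_apply, LinearMap.neg_apply, map_sub, map_neg, LX_LY, LX_PD]

lemma nXY_LY (d : W →ₗ[ℂ] W) (q : TP W) : (nXY d) (LY q) = LY ((nXY d) q) := by
  simp only [nXY, LinearMap.sub_apply, LinearMap.neg_apply, map_sub, map_neg, LX_LY, LY_PD]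

lemma nXY_PD (d : W →ₗ[ℂ] W) (q : TP W) : (nXY d) (PD d q) = PD d ((nXY d) q) := by
  simp only [nXY, LinearMap.sub_apply, LinearMap.neg_apply, map_sub, map_neg, LX_PD, LY_PD]

variable (n : U →ₗ[ℂ] V →ₗ[ℂ] OP W)

lemma exL_transport_nY {dU : U →ₗ[ℂ] U} (hd : ∀ u v, n (dU u) v = -lsh (n u v))
    (q : OP U) (v : V) :
    exL n (LX + LY) (evA (nY dU) q) v = exL n (LX + LY) (evA LX q) v := by
  have hB : ∀ P, exL n (LX + LY) ((nY dU) P) v = LX (exL n (LX + LY) P v) := by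
    intro P
    have : (nY dU) P = (-1 : ℂ) • (LY P) + (-1 : ℂ) • (PD dU P) := by
      simp [nY, LinearMap.sub_apply, LinearMap.neg_apply, sub_eq_add_neg]
    rw [this, exL_eq, map_add, map_smul, map_smul, ← exL_eq, ← exL_eq,
      exL_push_LY, exL_push_PD n _ hd LXY_LX LXY_LY]
    simp only [LinearMap.neg_apply, LinearMap.add_apply]
    module
  have hB' : ∀ P, exL n (LX + LY) (LX P) v = LX (exL n (LX + LY) P v) :=
    fun P => exL_push_LX n _ P v
  rw [exL_evA n (LX + LY) hB q, exL_evA n (LX + LY) hB' q]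

lemma exL_transport_nX {dU : U →ₗ[ℂ] U} (hd : ∀ u v, n (dU u) v = -lsh (n u v))
    (q : OP U) (v : V) :
    exL n (LX + LY) (evA (nX dU) q) v = exL n (LX + LY) (evA LY q) v := by
  have hB : ∀ P, exL n (LX + LY) ((nX dU) P) v = LY (exL n (LX + LY) P v) := by
    intro P
    have : (nX dU) P = (-1 : ℂ) • (LX P) + (-1 : ℂ) • (PD dU P) := by
      simp [nX, LinearMap.sub_apply, LinearMap.neg_apply, sub_eq_add_neg]
    rw [this, exL_eq, map_add, map_smul, map_smul, ← exL_eq, ← exL_eq,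
      exL_push_LX, exL_push_PD n _ hd LXY_LX LXY_LY]
    simp only [LinearMap.neg_apply, LinearMap.add_apply]
    module
  have hB' : ∀ P, exL n (LX + LY) (LY P) v = LY (exL n (LX + LY) P v) :=
    fun P => exL_push_LY n _ P v
  rw [exL_evA n (LX + LY) hB q, exL_evA n (LX + LY) hB' q]

lemma exR_transport_nX {dV : V →ₗ[ℂ] V} {dW : W →ₗ[ℂ] W}
    (hd : ∀ u v, n u (dV v) = lsh (n u v) + pD dW (n u v))
    (u : U) (q : OP V) :
    exR n (nXY dW) u (evA (nX dV) q) = exR n (nXY dW) u (evA LY q) := by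
  have hB : ∀ P, exR n (nXY dW) u ((nX dV) P) = LY (exR n (nXY dW) u P) := by
    intro P
    have : (nX dV) P = (-1 : ℂ) • (LX P) + (-1 : ℂ) • (PD dV P) := by
      simp [nX, LinearMap.sub_apply, LinearMap.neg_apply, sub_eq_add_neg]
    rw [this, exR_eq, map_add, map_smul, map_smul, ← exR_eq, ← exR_eq,
      exR_push_LX, exR_push_PD n _ hd (nXY_LX dW) (nXY_LY dW) (nXY_PD dW)]
    simp only [LinearMap.add_apply, nXY, LinearMap.sub_apply, LinearMap.neg_apply]
    module
  have hB' : ∀ P, exR n (nXY dW) u (LY P) = LY (exR n (nXY dW) u P) :=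
    fun P => exR_push_LY n _ u P
  rw [exR_evA n (nXY dW) hB q, exR_evA n (nXY dW) hB' q]

end Transports
section Cases

variable {R Q : Type*} [AddCommGroup R] [Module ℂ R] [AddCommGroup Q] [Module ℂ Q]
variable (dR : R →ₗ[ℂ] R) (dQ : Q →ₗ[ℂ] Q) (Ω : ExtDatum dR dQ) (m : R →ₗ[ℂ] R →ₗ[ℂ] OP R)

lemma Sfun_rrr (a b c : R) :
    Sfun (uprod dR dQ Ω m) (a, 0) (b, 0) (c, 0) = inlT R Q (Sfun m a b c) := by
  rw [Sfun, Sfun]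
  simp only [ev2U_rr dR dQ Ω m evA_LX_inl, ev2U_rr dR dQ Ω m evA_LY_inl,
    exLU_lr dR dQ Ω m evA_LXY_inl, exRU_rl dR dQ Ω m evA_LX_inl,
    exRU_rl dR dQ Ω m evA_LY_inl, map_add, map_sub]

lemma Sfun_qrr (hmc : ConfBilin dR dR dR m) (a b : R) (x : Q) :
    Sfun (uprod dR dQ Ω m) (0, x) (a, 0) (b, 0)
      = inlT R Q (
          (exL m (LX + LY) (ev2 Ω.phi LX x a - ev2 Ω.psi LX x a) b
            + exL Ω.phi (LX + LY) (ev2 Ω.r LY a x - ev2 Ω.l LY a x) b)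
          - (exR Ω.phi LX x (ev2 m LY a b) - exR m LY a (ev2 Ω.phi LX x b)
            - exL Ω.psi (nY dR) (ev2 Ω.r (nX dQ) b x) a))
        + inrT R Q (
          (exR Ω.r (nXY dQ) b (ev2 Ω.r LY a x - ev2 Ω.l LY a x))
          - (exL Ω.r (nX dQ) (ev2 m LY a b) x - exR Ω.l LY a (ev2 Ω.r (nX dQ) b x))) := by
  rw [Sfun]
  simp only [ev2U_qr dR dQ Ω m evA_LX_inl (hNr_LX dQ),
    ev2U_rr dR dQ Ω m evA_LY_inl,
    ev2U_rq dR dQ Ω m evA_LY_inr (hNl_LY dR),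
    exL_add_p, exR_add_p,
    exLU_lr dR dQ Ω m evA_LXY_inl,
    exLU_qr dR dQ Ω m evA_LXY_inl (hNr_LXY dQ),
    exRU_ql dR dQ Ω m evA_LX_inl (hNr_LX dQ),
    exRU_rl dR dQ Ω m evA_LY_inl,
    exRU_rq dR dQ Ω m evA_LY_inr (hNl_LY dR)]
  simp only [ev2]
  rw [exL_transport_nY m hmc.dleft,
    exL_transport_nX Ω.phi Ω.hphi.dleft,
    exR_transport_nX Ω.r Ω.hr.dright]
  simp only [exL_sub_p, exR_sub_p, map_add, map_sub]
  abel

lemma Sfun_rrq (a b : R) (x : Q) :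
    Sfun (uprod dR dQ Ω m) (a, 0) (b, 0) (0, x)
      = inlT R Q (
          (exR Ω.psi (nXY dR) x (ev2 m LX a b - ev2 m LY b a))
          - (exR m LX a (ev2 Ω.psi (nY dR) x b) - exR m LY b (ev2 Ω.psi (nX dR) x a)
            + exL Ω.psi (nX dR) (ev2 Ω.l LY b x) a - exL Ω.psi (nY dR) (ev2 Ω.l LX a x) b))
        + inrT R Q (
          (exL Ω.l (LX + LY) (ev2 m LX a b) x - exL Ω.l (LX + LY) (ev2 m LY b a) x)
          - (exR Ω.l LX a (ev2 Ω.l LY b x) - exR Ω.l LY b (ev2 Ω.l LX a x))) := by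
  rw [Sfun]
  simp only [ev2U_rr dR dQ Ω m evA_LX_inl, ev2U_rr dR dQ Ω m evA_LY_inl,
    ev2U_rq dR dQ Ω m evA_LX_inr (hNl_LX dR),
    ev2U_rq dR dQ Ω m evA_LY_inr (hNl_LY dR),
    exL_add_p, exR_add_p,
    exLU_lq dR dQ Ω m evA_LXY_inr (hNl_LXY dR),
    exRU_rl dR dQ Ω m evA_LX_inl, exRU_rl dR dQ Ω m evA_LY_inl,
    exRU_rq dR dQ Ω m evA_LX_inr (hNl_LX dR),
    exRU_rq dR dQ Ω m evA_LY_inr (hNl_LY dR)]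
  simp only [exL_sub_p, exR_sub_p, map_add, map_sub]
  abel

lemma Sfun_rqq (a : R) (x y : Q) :
    Sfun (uprod dR dQ Ω m) (a, 0) (0, x) (0, y)
      = inlT R Q (
          (exR Ω.psi (nXY dR) y (ev2 Ω.psi LY x a - ev2 Ω.phi LY x a)
            + exL Ω.g (LX + LY) (ev2 Ω.l LX a x) y
            - exR m LX a (ev2 Ω.g LY x y)
            - exL Ω.psi (nX dR) (ev2 Ω.o LY x y) a)
          - (exL Ω.g (LX + LY) (ev2 Ω.r (nY dQ) a x) y
            - exR Ω.phi LY x (ev2 Ω.psi (nX dR) y a)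
            - exR Ω.g LY x (ev2 Ω.l LX a y)))
        + inrT R Q (
          (exL Ω.o (LX + LY) (ev2 Ω.l LX a x) y
            + exL Ω.l (LX + LY) (ev2 Ω.psi (nX dR) x a) y
            - exR Ω.l LX a (ev2 Ω.o LY x y))
          - (exL Ω.l (LX + LY) (ev2 Ω.phi LY x a) y
            + exL Ω.o (LX + LY) (ev2 Ω.r (nY dQ) a x) y
            - exL Ω.r (nY dQ) (ev2 Ω.psi (nX dR) y a) x
            - exR Ω.o LY x (ev2 Ω.l LX a y))) := by
  rw [Sfun]
  simp only [ev2U_rq dR dQ Ω m evA_LX_inr (hNl_LX dR),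
    ev2U_qq dR dQ Ω m evA_LY_inl evA_LY_inr,
    ev2U_qr dR dQ Ω m evA_LY_inl (hNr_LY dQ),
    exL_add_p, exR_add_p,
    exLU_lq dR dQ Ω m evA_LXY_inr (hNl_LXY dR),
    exLU_qq dR dQ Ω m evA_LXY_inl evA_LXY_inr,
    exRU_rl dR dQ Ω m evA_LX_inl,
    exRU_rq dR dQ Ω m evA_LX_inr (hNl_LX dR),
    exRU_ql dR dQ Ω m evA_LY_inl (hNr_LY dQ),
    exRU_qq dR dQ Ω m evA_LY_inl evA_LY_inr]
  simp only [ev2]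
  rw [exR_transport_nX Ω.psi Ω.hpsi.dright]
  simp only [exL_sub_p, exR_sub_p, map_add, map_sub]
  abel

lemma Sfun_qqr (a : R) (x y : Q) :
    Sfun (uprod dR dQ Ω m) (0, x) (0, y) (a, 0)
      = inlT R Q (
          (exL m (LX + LY) (ev2 Ω.g LX x y - ev2 Ω.g LY y x) a
            + exL Ω.phi (LX + LY) (ev2 Ω.o LX x y - ev2 Ω.o LY y x) a)
          - (exR Ω.phi LX x (ev2 Ω.phi LY y a) - exR Ω.phi LY y (ev2 Ω.phi LX x a)
            + exR Ω.g LX x (ev2 Ω.r (nY dQ) a y) - exR Ω.g LY y (ev2 Ω.r (nX dQ) a x)))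
        + inrT R Q (
          (exR Ω.r (nXY dQ) a (ev2 Ω.o LX x y - ev2 Ω.o LY y x))
          - (exL Ω.r (nX dQ) (ev2 Ω.phi LY y a) x - exL Ω.r (nY dQ) (ev2 Ω.phi LX x a) y
            + exR Ω.o LX x (ev2 Ω.r (nY dQ) a y) - exR Ω.o LY y (ev2 Ω.r (nX dQ) a x))) := by
  rw [Sfun]
  simp only [ev2U_qq dR dQ Ω m evA_LX_inl evA_LX_inr,
    ev2U_qq dR dQ Ω m evA_LY_inl evA_LY_inr,
    ev2U_qr dR dQ Ω m evA_LX_inl (hNr_LX dQ),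
    ev2U_qr dR dQ Ω m evA_LY_inl (hNr_LY dQ),
    exL_add_p, exR_add_p,
    exLU_lr dR dQ Ω m evA_LXY_inl,
    exLU_qr dR dQ Ω m evA_LXY_inl (hNr_LXY dQ),
    exRU_ql dR dQ Ω m evA_LX_inl (hNr_LX dQ),
    exRU_ql dR dQ Ω m evA_LY_inl (hNr_LY dQ),
    exRU_qq dR dQ Ω m evA_LX_inl evA_LX_inr,
    exRU_qq dR dQ Ω m evA_LY_inl evA_LY_inr]
  simp only [exL_sub_p, exR_sub_p, map_add, map_sub]
  abel

lemma Sfun_qqq (x y z : Q) :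
    Sfun (uprod dR dQ Ω m) (0, x) (0, y) (0, z)
      = inlT R Q (
          (exR Ω.psi (nXY dR) z (ev2 Ω.g LX x y) + exL Ω.g (LX + LY) (ev2 Ω.o LX x y) z
            - exR Ω.phi LX x (ev2 Ω.g LY y z) - exR Ω.g LX x (ev2 Ω.o LY y z))
          - (exR Ω.psi (nXY dR) z (ev2 Ω.g LY y x) + exL Ω.g (LX + LY) (ev2 Ω.o LY y x) z
            - exR Ω.phi LY y (ev2 Ω.g LX x z) - exR Ω.g LY y (ev2 Ω.o LX x z)))
        + inrT R Q (
          (exL Ω.l (LX + LY) (ev2 Ω.g LX x y) z + exL Ω.o (LX + LY) (ev2 Ω.o LX x y) z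
            - exL Ω.r (nX dQ) (ev2 Ω.g LY y z) x - exR Ω.o LX x (ev2 Ω.o LY y z))
          - (exL Ω.l (LX + LY) (ev2 Ω.g LY y x) z + exL Ω.o (LX + LY) (ev2 Ω.o LY y x) z
            - exL Ω.r (nY dQ) (ev2 Ω.g LX x z) y - exR Ω.o LY y (ev2 Ω.o LX x z))) := by
  rw [Sfun]
  simp only [ev2U_qq dR dQ Ω m evA_LX_inl evA_LX_inr,
    ev2U_qq dR dQ Ω m evA_LY_inl evA_LY_inr,
    exL_add_p, exR_add_p,
    exLU_lq dR dQ Ω m evA_LXY_inr (hNl_LXY dR),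
    exLU_qq dR dQ Ω m evA_LXY_inl evA_LXY_inr,
    exRU_ql dR dQ Ω m evA_LX_inl (hNr_LX dQ),
    exRU_ql dR dQ Ω m evA_LY_inl (hNr_LY dQ),
    exRU_qq dR dQ Ω m evA_LX_inl evA_LX_inr,
    exRU_qq dR dQ Ω m evA_LY_inl evA_LY_inr]
  simp only [exL_sub_p, exR_sub_p, map_add, map_sub]
  abel

end Cases
section Extract

variable {R Q : Type*} [AddCommGroup R] [Module ℂ R] [AddCommGroup Q] [Module ℂ Q]

lemma inl_inr_eq_zero (p : TP R) (q : TP Q) (h : inlT R Q p + inrT R Q q = 0) :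
    p = 0 ∧ q = 0 := by
  have h' : inlT R Q p + inrT R Q q = inlT R Q 0 + inrT R Q 0 := by simpa using h
  exact (inl_inr_eq_iff p 0 q 0).mp h'

end Extract
/-- **Theorem 3.2.** Let `R` be a left-symmetric conformal algebra, `Q` a ℂ[∂]-module and
`Ω(R,Q) = (φ, ψ, l, r, g, ∘)` an extending datum of `R` by `Q`.  The unified product `R ♮ Q`
is a left-symmetric conformal algebra if and only if the compatibility conditions
(LC1)–(LC10) hold. -/
theorem unified_product_is_LSCA_iff
    {R Q : Type*} [AddCommGroup R] [Module ℂ R] [AddCommGroup Q] [Module ℂ Q]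
    (dR : R →ₗ[ℂ] R) (dQ : Q →ₗ[ℂ] Q)
    (m : R →ₗ[ℂ] R →ₗ[ℂ] OP R) (hm : IsLSCA dR m)
    (Ω : ExtDatum dR dQ) :
    IsLSCA (dR.prodMap dQ) (uprod dR dQ Ω m) ↔
      -- (LC1)
      ((∀ (a b : R) (x : Q),
        exL m (LX + LY) (ev2 Ω.phi LX x a - ev2 Ω.psi LX x a) b
            + exL Ω.phi (LX + LY) (ev2 Ω.r LY a x - ev2 Ω.l LY a x) b
          = exR Ω.phi LX x (ev2 m LY a b) - exR m LY a (ev2 Ω.phi LX x b)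
            - exL Ω.psi (nY dR) (ev2 Ω.r (nX dQ) b x) a) ∧
      -- (LC2)
      (∀ (a b : R) (x : Q),
        exR Ω.r (nXY dQ) b (ev2 Ω.r LY a x - ev2 Ω.l LY a x)
          = exL Ω.r (nX dQ) (ev2 m LY a b) x - exR Ω.l LY a (ev2 Ω.r (nX dQ) b x)) ∧
      -- (LC3)
      (∀ (a b : R) (x : Q),
        exR Ω.psi (nXY dR) x (ev2 m LX a b - ev2 m LY b a)
          = exR m LX a (ev2 Ω.psi (nY dR) x b) - exR m LY b (ev2 Ω.psi (nX dR) x a)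
            + exL Ω.psi (nX dR) (ev2 Ω.l LY b x) a - exL Ω.psi (nY dR) (ev2 Ω.l LX a x) b) ∧
      -- (LC4)
      (∀ (a b : R) (x : Q),
        exL Ω.l (LX + LY) (ev2 m LX a b) x - exL Ω.l (LX + LY) (ev2 m LY b a) x
          = exR Ω.l LX a (ev2 Ω.l LY b x) - exR Ω.l LY b (ev2 Ω.l LX a x)) ∧
      -- (LC5)
      (∀ (a : R) (x y : Q),
        exR Ω.psi (nXY dR) y (ev2 Ω.psi LY x a - ev2 Ω.phi LY x a)
            + exL Ω.g (LX + LY) (ev2 Ω.l LX a x) y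
            - exR m LX a (ev2 Ω.g LY x y)
            - exL Ω.psi (nX dR) (ev2 Ω.o LY x y) a
          = exL Ω.g (LX + LY) (ev2 Ω.r (nY dQ) a x) y
            - exR Ω.phi LY x (ev2 Ω.psi (nX dR) y a)
            - exR Ω.g LY x (ev2 Ω.l LX a y)) ∧
      -- (LC6)
      (∀ (a : R) (x y : Q),
        exL Ω.o (LX + LY) (ev2 Ω.l LX a x) y
            + exL Ω.l (LX + LY) (ev2 Ω.psi (nX dR) x a) y
            - exR Ω.l LX a (ev2 Ω.o LY x y)
          = exL Ω.l (LX + LY) (ev2 Ω.phi LY x a) y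
            + exL Ω.o (LX + LY) (ev2 Ω.r (nY dQ) a x) y
            - exL Ω.r (nY dQ) (ev2 Ω.psi (nX dR) y a) x
            - exR Ω.o LY x (ev2 Ω.l LX a y)) ∧
      -- (LC7)
      (∀ (a : R) (x y : Q),
        exL m (LX + LY) (ev2 Ω.g LX x y - ev2 Ω.g LY y x) a
            + exL Ω.phi (LX + LY) (ev2 Ω.o LX x y - ev2 Ω.o LY y x) a
          = exR Ω.phi LX x (ev2 Ω.phi LY y a) - exR Ω.phi LY y (ev2 Ω.phi LX x a)
            + exR Ω.g LX x (ev2 Ω.r (nY dQ) a y) - exR Ω.g LY y (ev2 Ω.r (nX dQ) a x)) ∧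
      -- (LC8)
      (∀ (a : R) (x y : Q),
        exR Ω.r (nXY dQ) a (ev2 Ω.o LX x y - ev2 Ω.o LY y x)
          = exL Ω.r (nX dQ) (ev2 Ω.phi LY y a) x - exL Ω.r (nY dQ) (ev2 Ω.phi LX x a) y
            + exR Ω.o LX x (ev2 Ω.r (nY dQ) a y) - exR Ω.o LY y (ev2 Ω.r (nX dQ) a x)) ∧
      -- (LC9)
      (∀ x y z : Q,
        exR Ω.psi (nXY dR) z (ev2 Ω.g LX x y) + exL Ω.g (LX + LY) (ev2 Ω.o LX x y) z
            - exR Ω.phi LX x (ev2 Ω.g LY y z) - exR Ω.g LX x (ev2 Ω.o LY y z)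
          = exR Ω.psi (nXY dR) z (ev2 Ω.g LY y x) + exL Ω.g (LX + LY) (ev2 Ω.o LY y x) z
            - exR Ω.phi LY y (ev2 Ω.g LX x z) - exR Ω.g LY y (ev2 Ω.o LX x z)) ∧
      -- (LC10)
      (∀ x y z : Q,
        exL Ω.l (LX + LY) (ev2 Ω.g LX x y) z + exL Ω.o (LX + LY) (ev2 Ω.o LX x y) z
            - exL Ω.r (nX dQ) (ev2 Ω.g LY y z) x - exR Ω.o LX x (ev2 Ω.o LY y z)
          = exL Ω.l (LX + LY) (ev2 Ω.g LY y x) z + exL Ω.o (LX + LY) (ev2 Ω.o LY y x) z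
            - exL Ω.r (nY dQ) (ev2 Ω.g LX x z) y - exR Ω.o LY y (ev2 Ω.o LX x z))) := by
  
  constructor
  · intro hU
    have hS : ∀ e1 e2 e3 : R × Q, Sfun (uprod dR dQ Ω m) e1 e2 e3 = 0 :=
      (lsym_iff_Sfun _).mp hU.lsym
    refine ⟨?_, ?_, ?_, ?_, ?_, ?_, ?_, ?_, ?_, ?_⟩
    · intro a b x
      have h := hS (0, x) (a, 0) (b, 0)
      rw [Sfun_qrr dR dQ Ω m hm.conf] at h
      exact sub_eq_zero.mp (inl_inr_eq_zero _ _ h).1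
    · intro a b x
      have h := hS (0, x) (a, 0) (b, 0)
      rw [Sfun_qrr dR dQ Ω m hm.conf] at h
      exact sub_eq_zero.mp (inl_inr_eq_zero _ _ h).2
    · intro a b x
      have h := hS (a, 0) (b, 0) (0, x)
      rw [Sfun_rrq dR dQ Ω m] at h
      exact sub_eq_zero.mp (inl_inr_eq_zero _ _ h).1
    · intro a b x
      have h := hS (a, 0) (b, 0) (0, x)
      rw [Sfun_rrq dR dQ Ω m] at h
      exact sub_eq_zero.mp (inl_inr_eq_zero _ _ h).2
    · intro a x y
      have h := hS (a, 0) (0, x) (0, y)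
      rw [Sfun_rqq dR dQ Ω m] at h
      exact sub_eq_zero.mp (inl_inr_eq_zero _ _ h).1
    · intro a x y
      have h := hS (a, 0) (0, x) (0, y)
      rw [Sfun_rqq dR dQ Ω m] at h
      exact sub_eq_zero.mp (inl_inr_eq_zero _ _ h).2
    · intro a x y
      have h := hS (0, x) (0, y) (a, 0)
      rw [Sfun_qqr dR dQ Ω m] at h
      exact sub_eq_zero.mp (inl_inr_eq_zero _ _ h).1
    · intro a x y
      have h := hS (0, x) (0, y) (a, 0)
      rw [Sfun_qqr dR dQ Ω m] at h
      exact sub_eq_zero.mp (inl_inr_eq_zero _ _ h).2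
    · intro x y z
      have h := hS (0, x) (0, y) (0, z)
      rw [Sfun_qqq dR dQ Ω m] at h
      exact sub_eq_zero.mp (inl_inr_eq_zero _ _ h).1
    · intro x y z
      have h := hS (0, x) (0, y) (0, z)
      rw [Sfun_qqq dR dQ Ω m] at h
      exact sub_eq_zero.mp (inl_inr_eq_zero _ _ h).2
  · rintro ⟨h1, h2, h3, h4, h5, h6, h7, h8, h9, h10⟩
    refine ⟨uprod_confBilin dR dQ Ω m hm.conf, ?_⟩
    rw [lsym_iff_Sfun]
    have Zrrr : ∀ a b c : R, Sfun (uprod dR dQ Ω m) (a, 0) (b, 0) (c, 0) = 0 := by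
      intro a b c
      rw [Sfun_rrr dR dQ Ω m, ((lsym_iff_Sfun m).mp hm.lsym) a b c, map_zero]
    have Zqrr : ∀ (a b : R) (x : Q), Sfun (uprod dR dQ Ω m) (0, x) (a, 0) (b, 0) = 0 := by
      intro a b x
      rw [Sfun_qrr dR dQ Ω m hm.conf, h1 a b x, h2 a b x, sub_self, sub_self, map_zero,
        map_zero, add_zero]
    have Zrrq : ∀ (a b : R) (x : Q), Sfun (uprod dR dQ Ω m) (a, 0) (b, 0) (0, x) = 0 := by
      intro a b x
      rw [Sfun_rrq dR dQ Ω m, h3 a b x, h4 a b x, sub_self, sub_self, map_zero,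
        map_zero, add_zero]
    have Zrqq : ∀ (a : R) (x y : Q), Sfun (uprod dR dQ Ω m) (a, 0) (0, x) (0, y) = 0 := by
      intro a x y
      rw [Sfun_rqq dR dQ Ω m, h5 a x y, h6 a x y, sub_self, sub_self, map_zero,
        map_zero, add_zero]
    have Zqqr : ∀ (a : R) (x y : Q), Sfun (uprod dR dQ Ω m) (0, x) (0, y) (a, 0) = 0 := by
      intro a x y
      rw [Sfun_qqr dR dQ Ω m, h7 a x y, h8 a x y, sub_self, sub_self, map_zero,
        map_zero, add_zero]
    have Zqqq : ∀ x y z : Q, Sfun (uprod dR dQ Ω m) (0, x) (0, y) (0, z) = 0 := by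
      intro x y z
      rw [Sfun_qqq dR dQ Ω m, h9 x y z, h10 x y z, sub_self, sub_self, map_zero,
        map_zero, add_zero]
    have Zrqr : ∀ (a b : R) (x : Q), Sfun (uprod dR dQ Ω m) (a, 0) (0, x) (b, 0) = 0 := by
      intro a b x
      rw [Sfun_swap, Zqrr a b x, map_zero, neg_zero]
    have Zqrq : ∀ (a : R) (x y : Q), Sfun (uprod dR dQ Ω m) (0, x) (a, 0) (0, y) = 0 := by
      intro a x y
      rw [Sfun_swap, Zrqq a x y, map_zero, neg_zero]
    intro e1 e2 e3
    obtain ⟨a, x⟩ := e1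
    obtain ⟨b, y⟩ := e2
    obtain ⟨c, z⟩ := e3
    rw [show ((a, x) : R × Q) = (a, 0) + (0, x) from by simp,
      show ((b, y) : R × Q) = (b, 0) + (0, y) from by simp,
      show ((c, z) : R × Q) = (c, 0) + (0, z) from by simp]
    simp only [Sfun_add1, Sfun_add2, Sfun_add3, Zrrr, Zqrr, Zrqr, Zrrq, Zqqr, Zqrq,
      Zrqq, Zqqq, add_zero, zero_add]
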